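/- For every prefix circuit on n inputs (a circuit of binary associative-operation gates computing all n prefix outputs), the depth D and size S satisfy D + S ≥ 2n − 2 (Snir's bound). -/

import Mathlib

/-- A prefix circuit on `n` inputs: a DAG of `size` gates, each with fan-in 2.
Each gate input is either one of the `n` circuit inputs (`Sum.inl`) or the output of an
earlier gate (`Sum.inr`); acyclicity is enforced by requiring gate references to point to
strictly smaller gate indices. -/
structure PrefixCircuit (n : ℕ) where
  size : ℕ
  left : Fin size → Fin n ⊕ Fin size
  right : Fin size → Fin n ⊕ Fin size
  left_lt : ∀ (g h : Fin size), left g = Sum.inr h → (h : ℕ) < (g : ℕ)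
  right_lt : ∀ (g h : Fin size), right g = Sum.inr h → (h : ℕ) < (g : ℕ)

/-- The value of gate `k` as an element of the free semigroup on the generators
`x_0, …, x_{n-1}`, represented as a (nonempty) word in `List (Fin n)`:
each gate concatenates (i.e. multiplies, in the free semigroup) its two operands. -/
def gateVal {n : ℕ} (c : PrefixCircuit n) : ℕ → List (Fin n)
  | k =>
    if hk : k < c.size then
      (match hL : c.left ⟨k, hk⟩ with
        | Sum.inl i => [i]
        | Sum.inr h => gateVal c h.val) ++
      (match hR : c.right ⟨k, hk⟩ with
        | Sum.inl i => [i]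
        | Sum.inr h => gateVal c h.val)
    else []
  termination_by k => k
  decreasing_by
    · exact c.left_lt ⟨k, hk⟩ h hL
    · exact c.right_lt ⟨k, hk⟩ h hR

/-- Number of gates on the longest path from an input to (and including) gate `k`. -/
def gateDepth {n : ℕ} (c : PrefixCircuit n) : ℕ → ℕ
  | k =>
    if hk : k < c.size then
      1 + max
        (match hL : c.left ⟨k, hk⟩ with
          | Sum.inl _ => 0
          | Sum.inr h => gateDepth c h.val)
        (match hR : c.right ⟨k, hk⟩ with
          | Sum.inl _ => 0
          | Sum.inr h => gateDepth c h.val)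
    else 0
  termination_by k => k
  decreasing_by
    · exact c.left_lt ⟨k, hk⟩ h hL
    · exact c.right_lt ⟨k, hk⟩ h hR

/-- The value available at a node (an input or a gate output). -/
def nodeVal {n : ℕ} (c : PrefixCircuit n) : Fin n ⊕ Fin c.size → List (Fin n)
  | Sum.inl i => [i]
  | Sum.inr g => gateVal c g.val

/-- The depth of the circuit: the maximum number of gates on any input-to-output path. -/
def circuitDepth {n : ℕ} (c : PrefixCircuit n) : ℕ :=
  Finset.univ.sup fun g : Fin c.size => gateDepth c g.val

/-- `c` computes all prefixes: for each `i`, some node carries the word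
`x_0 x_1 ⋯ x_i` (the product `x_0 ∘ x_1 ∘ ⋯ ∘ x_i` in the free semigroup). -/
def ComputesPrefixes {n : ℕ} (c : PrefixCircuit n) : Prop :=
  ∀ i : Fin n, ∃ v : Fin n ⊕ Fin c.size, nodeVal c v = (List.finRange n).take (i + 1)

section Aux
variable {n : ℕ} (c : PrefixCircuit n)

/-- depth contribution of a node -/
def nodeDepth : Fin n ⊕ Fin c.size → ℕ
  | Sum.inl _ => 0
  | Sum.inr g => gateDepth c g.val

/-- the set of gate indices feeding into gate `k` (including `k` itself) -/
def cone : ℕ → Finset ℕ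
  | k =>
    if hk : k < c.size then
      insert k
        ((match hL : c.left ⟨k, hk⟩ with
          | Sum.inl _ => (∅ : Finset ℕ)
          | Sum.inr h => cone h.val) ∪
         (match hR : c.right ⟨k, hk⟩ with
          | Sum.inl _ => (∅ : Finset ℕ)
          | Sum.inr h => cone h.val))
    else ∅
  termination_by k => k
  decreasing_by
    · exact c.left_lt ⟨k, hk⟩ h hL
    · exact c.right_lt ⟨k, hk⟩ h hR

/-- cone contribution of a node -/
def nodeCone : Fin n ⊕ Fin c.size → Finset ℕ
  | Sum.inl _ => ∅
  | Sum.inr g => cone c g.val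

lemma gateVal_eq {k : ℕ} (hk : k < c.size) :
    gateVal c k = nodeVal c (c.left ⟨k, hk⟩) ++ nodeVal c (c.right ⟨k, hk⟩) := by
  rw [gateVal, dif_pos hk]
  congr 1
  · rcases h : c.left ⟨k, hk⟩ with i | g <;> simp [h, nodeVal]
  · rcases h : c.right ⟨k, hk⟩ with i | g <;> simp [h, nodeVal]

lemma gateDepth_eq {k : ℕ} (hk : k < c.size) :
    gateDepth c k = 1 + max (nodeDepth c (c.left ⟨k, hk⟩)) (nodeDepth c (c.right ⟨k, hk⟩)) := by
  rw [gateDepth, dif_pos hk]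
  congr 2
  · rcases h : c.left ⟨k, hk⟩ with i | g <;> simp [h, nodeDepth]
  · rcases h : c.right ⟨k, hk⟩ with i | g <;> simp [h, nodeDepth]

lemma cone_eq {k : ℕ} (hk : k < c.size) :
    cone c k = insert k (nodeCone c (c.left ⟨k, hk⟩) ∪ nodeCone c (c.right ⟨k, hk⟩)) := by
  rw [cone, dif_pos hk]
  congr 2
  · rcases h : c.left ⟨k, hk⟩ with i | g <;> simp [h, nodeCone]
  · rcases h : c.right ⟨k, hk⟩ with i | g <;> simp [h, nodeCone]

lemma cone_eq_empty {k : ℕ} (hk : ¬ k < c.size) : cone c k = ∅ := by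
  rw [cone, dif_neg hk]

lemma gateVal_ne_nil : ∀ k, k < c.size → gateVal c k ≠ [] := by
  intro k
  induction k using Nat.strong_induction_on with
  | _ k ih =>
    intro hk
    rw [gateVal_eq c hk]
    simp only [ne_eq, List.append_eq_nil_iff, not_and]
    intro hL
    exfalso
    rcases h : c.left ⟨k, hk⟩ with i | g
    · rw [h] at hL; simp [nodeVal] at hL
    · rw [h] at hL
      exact ih g.val (c.left_lt ⟨k, hk⟩ g h) g.isLt hL

lemma nodeVal_ne_nil : ∀ v, nodeVal c v ≠ [] := by
  intro v
  rcases v with i | g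
  · simp [nodeVal]
  · exact gateVal_ne_nil c g.val g.isLt

lemma mem_cone : ∀ k, ∀ j ∈ cone c k, j < c.size ∧ j ≤ k := by
  intro k
  induction k using Nat.strong_induction_on with
  | _ k ih =>
    intro j hj
    by_cases hk : k < c.size
    · rw [cone_eq c hk] at hj
      rcases Finset.mem_insert.mp hj with rfl | hj
      · exact ⟨hk, le_refl _⟩
      · rcases Finset.mem_union.mp hj with hj | hj
        · rcases h : c.left ⟨k, hk⟩ with i | g
          · rw [h] at hj; simp [nodeCone] at hj
          · rw [h] at hj
            have hg := c.left_lt ⟨k, hk⟩ g h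
            obtain ⟨h1, h2⟩ := ih g.val hg j hj
            exact ⟨h1, le_trans h2 (le_of_lt hg)⟩
        · rcases h : c.right ⟨k, hk⟩ with i | g
          · rw [h] at hj; simp [nodeCone] at hj
          · rw [h] at hj
            have hg := c.right_lt ⟨k, hk⟩ g h
            obtain ⟨h1, h2⟩ := ih g.val hg j hj
            exact ⟨h1, le_trans h2 (le_of_lt hg)⟩
    · rw [cone_eq_empty c hk] at hj; simp at hj

lemma self_mem_cone {k : ℕ} (hk : k < c.size) : k ∈ cone c k := by
  rw [cone_eq c hk]; exact Finset.mem_insert_self _ _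

lemma val_subset_of_mem_cone : ∀ k, ∀ j ∈ cone c k, ∀ a, a ∈ gateVal c j → a ∈ gateVal c k := by
  intro k
  induction k using Nat.strong_induction_on with
  | _ k ih =>
    intro j hj a ha
    by_cases hk : k < c.size
    · rw [cone_eq c hk] at hj
      rw [gateVal_eq c hk, List.mem_append]
      rcases Finset.mem_insert.mp hj with rfl | hj
      · rw [gateVal_eq c hk, List.mem_append] at ha; exact ha
      · rcases Finset.mem_union.mp hj with hj | hj
        · left
          rcases h : c.left ⟨k, hk⟩ with i | g
          · rw [h] at hj; simp [nodeCone] at hj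
          · rw [h] at hj
            exact ih g.val (c.left_lt ⟨k, hk⟩ g h) j hj a ha
        · right
          rcases h : c.right ⟨k, hk⟩ with i | g
          · rw [h] at hj; simp [nodeCone] at hj
          · rw [h] at hj
            exact ih g.val (c.right_lt ⟨k, hk⟩ g h) j hj a ha
    · rw [cone_eq_empty c hk] at hj; simp at hj

lemma depth_lt_of_mem_cone : ∀ k, ∀ j ∈ cone c k, j ≠ k → gateDepth c j < gateDepth c k := by
  intro k
  induction k using Nat.strong_induction_on with
  | _ k ih =>
    intro j hj hne
    by_cases hk : k < c.size
    · rw [cone_eq c hk] at hj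
      rcases Finset.mem_insert.mp hj with rfl | hj
      · exact absurd rfl hne
      · rw [gateDepth_eq c hk]
        rcases Finset.mem_union.mp hj with hj | hj
        · rcases h : c.left ⟨k, hk⟩ with i | g
          · rw [h] at hj; simp [nodeCone] at hj
          · rw [h] at hj
            have hd : gateDepth c j ≤ gateDepth c g.val := by
              rcases eq_or_ne j g.val with rfl | hne'
              · exact le_refl _
              · exact le_of_lt (ih g.val (c.left_lt ⟨k, hk⟩ g h) j hj hne')
            have h1 : gateDepth c g.val ≤ nodeDepth c (c.left ⟨k, hk⟩) := by
              rw [h]; exact le_refl _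
            have h2 := hd.trans (h1.trans (le_max_left (nodeDepth c (c.left ⟨k, hk⟩))
              (nodeDepth c (c.right ⟨k, hk⟩))))
            rw [h] at h2
            omega
        · rcases h : c.right ⟨k, hk⟩ with i | g
          · rw [h] at hj; simp [nodeCone] at hj
          · rw [h] at hj
            have hd : gateDepth c j ≤ gateDepth c g.val := by
              rcases eq_or_ne j g.val with rfl | hne'
              · exact le_refl _
              · exact le_of_lt (ih g.val (c.right_lt ⟨k, hk⟩ g h) j hj hne')
            have h1 : gateDepth c g.val ≤ nodeDepth c (c.right ⟨k, hk⟩) := by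
              rw [h]; exact le_refl _
            have h2 := hd.trans (h1.trans (le_max_right (nodeDepth c (c.left ⟨k, hk⟩))
              (nodeDepth c (c.right ⟨k, hk⟩))))
            rw [h] at h2
            omega
    · rw [cone_eq_empty c hk] at hj; simp at hj

end Aux
section Aux2
variable {n : ℕ} (c : PrefixCircuit n)

lemma mem_nodeCone_size {v : Fin n ⊕ Fin c.size} {j : ℕ} (hj : j ∈ nodeCone c v) :
    j < c.size := by
  rcases v with i | g
  · simp [nodeCone] at hj
  · exact (mem_cone c g.val j hj).1

lemma nodeCone_val_subset {v : Fin n ⊕ Fin c.size} {j : ℕ} (hj : j ∈ nodeCone c v)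
    {a : Fin n} (ha : a ∈ gateVal c j) : a ∈ nodeVal c v := by
  rcases v with i | g
  · simp [nodeCone] at hj
  · exact val_subset_of_mem_cone c g.val j hj a ha

lemma nodeCone_disjoint {k : ℕ} (hk : k < c.size) (hnd : (gateVal c k).Nodup) :
    Disjoint (nodeCone c (c.left ⟨k, hk⟩)) (nodeCone c (c.right ⟨k, hk⟩)) := by
  rw [gateVal_eq c hk] at hnd
  obtain ⟨-, -, hdisj⟩ := List.nodup_append.mp hnd
  rw [Finset.disjoint_left]
  intro j hjL hjR
  have hjs : j < c.size := mem_nodeCone_size c hjL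
  obtain ⟨a, ha⟩ := List.exists_mem_of_ne_nil _ (gateVal_ne_nil c j hjs)
  exact hdisj _ (nodeCone_val_subset c hjL ha) _ (nodeCone_val_subset c hjR ha) rfl

lemma nodeCone_mem_lt {k : ℕ} (hk : k < c.size) {v : Fin n ⊕ Fin c.size}
    (hv : ∀ g : Fin c.size, v = Sum.inr g → g.val < k) {j : ℕ} (hj : j ∈ nodeCone c v) :
    j < k := by
  rcases v with i | g
  · simp [nodeCone] at hj
  · exact lt_of_le_of_lt (mem_cone c g.val j hj).2 (hv g rfl)

lemma cone_card : ∀ k, k < c.size → (gateVal c k).Nodup →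
    (gateVal c k).length ≤ (cone c k).card + 1 := by
  intro k
  induction k using Nat.strong_induction_on with
  | _ k ih =>
    intro hk hnd
    have hndA := hnd
    rw [gateVal_eq c hk] at hndA
    obtain ⟨hndL, hndR, -⟩ := List.nodup_append.mp hndA
    have key : ∀ v : Fin n ⊕ Fin c.size, (∀ g : Fin c.size, v = Sum.inr g → g.val < k) →
        (nodeVal c v).Nodup → (nodeVal c v).length ≤ (nodeCone c v).card + 1 := by
      intro v hv hnd'
      rcases v with i | g
      · simp [nodeVal, nodeCone]
      · exact ih g.val (hv g rfl) g.isLt hnd'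
    have hLlt : ∀ g : Fin c.size, c.left ⟨k, hk⟩ = Sum.inr g → g.val < k :=
      fun g hg => c.left_lt ⟨k, hk⟩ g hg
    have hRlt : ∀ g : Fin c.size, c.right ⟨k, hk⟩ = Sum.inr g → g.val < k :=
      fun g hg => c.right_lt ⟨k, hk⟩ g hg
    have hL := key _ hLlt hndL
    have hR := key _ hRlt hndR
    have hdisj := nodeCone_disjoint c hk hnd
    have hknotin : k ∉ nodeCone c (c.left ⟨k, hk⟩) ∪ nodeCone c (c.right ⟨k, hk⟩) := by
      intro hmem
      rcases Finset.mem_union.mp hmem with hmem | hmem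
      · exact absurd (nodeCone_mem_lt c hk hLlt hmem) (lt_irrefl k)
      · exact absurd (nodeCone_mem_lt c hk hRlt hmem) (lt_irrefl k)
    rw [gateVal_eq c hk, cone_eq c hk, List.length_append,
      Finset.card_insert_of_notMem hknotin, Finset.card_union_of_disjoint hdisj]
    omega

lemma cone_comparable : ∀ k, (gateVal c k).Nodup →
    ∀ g1 ∈ cone c k, ∀ g2 ∈ cone c k, ∀ a : Fin n,
    a ∈ gateVal c g1 → a ∈ gateVal c g2 → g1 ∈ cone c g2 ∨ g2 ∈ cone c g1 := by
  intro k
  induction k using Nat.strong_induction_on with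
  | _ k ih =>
    intro hnd g1 hg1 g2 hg2 a ha1 ha2
    by_cases hk : k < c.size
    · have hg1' := hg1
      have hg2' := hg2
      rw [cone_eq c hk] at hg1' hg2'
      rcases Finset.mem_insert.mp hg1' with rfl | h1
      · exact Or.inr hg2
      rcases Finset.mem_insert.mp hg2' with rfl | h2
      · exact Or.inl hg1
      have hnd' := hnd
      rw [gateVal_eq c hk] at hnd'
      obtain ⟨hndL, hndR, hdisj⟩ := List.nodup_append.mp hnd'
      rcases Finset.mem_union.mp h1 with h1 | h1 <;> rcases Finset.mem_union.mp h2 with h2 | h2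
      · rcases hL : c.left ⟨k, hk⟩ with i | g
        · rw [hL] at h1; simp [nodeCone] at h1
        · rw [hL] at h1 h2
          have hndg : (gateVal c g.val).Nodup := by rw [hL] at hndL; exact hndL
          exact ih g.val (c.left_lt ⟨k, hk⟩ g hL) hndg g1 h1 g2 h2 a ha1 ha2
      · exact absurd rfl
          (hdisj _ (nodeCone_val_subset c h1 ha1) _ (nodeCone_val_subset c h2 ha2))
      · exact absurd rfl
          (hdisj _ (nodeCone_val_subset c h2 ha2) _ (nodeCone_val_subset c h1 ha1))
      · rcases hR : c.right ⟨k, hk⟩ with i | g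
        · rw [hR] at h1; simp [nodeCone] at h1
        · rw [hR] at h1 h2
          have hndg : (gateVal c g.val).Nodup := by rw [hR] at hndR; exact hndR
          exact ih g.val (c.right_lt ⟨k, hk⟩ g hR) hndg g1 h1 g2 h2 a ha1 ha2
    · rw [cone_eq_empty c hk] at hg1; simp at hg1

end Aux2
theorem snir_bound {n : ℕ} (c : PrefixCircuit n) (hc : ComputesPrefixes c) :
    2 * n - 2 ≤ circuitDepth c + c.size := by
  rcases Nat.lt_or_ge n 2 with hn | hn
  · omega
  haveI : NeZero n := ⟨by omega⟩
  have hzeromem : ∀ j : ℕ, (0 : Fin n) ∈ (List.finRange n).take (j + 1) := by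
    obtain ⟨m, rfl⟩ : ∃ m, n = m + 1 := ⟨n - 1, by omega⟩
    intro j
    rw [List.finRange_succ]
    simp [List.take_cons]
  set W : List (Fin n) := List.finRange n with hW
  have hWlen : W.length = n := List.length_finRange (n := n)
  have hWnodup : W.Nodup := List.nodup_finRange n
  -- the full-prefix gate
  obtain ⟨vO, hvO⟩ := hc ⟨n - 1, by omega⟩
  rw [show ((⟨n - 1, by omega⟩ : Fin n) : ℕ) + 1 = n by simp only [Fin.val_mk]; omega] at hvO
  have hvO' : nodeVal c vO = W := by
    rw [hvO, List.take_of_length_le (le_of_eq (List.length_finRange (n := n)))]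
  obtain ⟨O, hOlt, hOval⟩ : ∃ g : ℕ, g < c.size ∧ gateVal c g = W := by
    rcases vO with i | g
    · exfalso
      have := congrArg List.length hvO'
      simp [nodeVal, hWlen] at this
      omega
    · exact ⟨g.val, g.isLt, hvO'⟩
  -- prefix gates
  have hword : ∀ j : ℕ, ∃ g : ℕ, j < n - 1 →
      g < c.size ∧ gateVal c g = W.take (j + 2) := by
    intro j
    by_cases hj : j < n - 1
    · obtain ⟨v, hv⟩ := hc ⟨j + 1, by omega⟩
      rw [show ((⟨j + 1, by omega⟩ : Fin n) : ℕ) + 1 = j + 2 by simp only [Fin.val_mk]] at hv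
      rcases v with i | g
      · exfalso
        have := congrArg List.length hv
        simp [nodeVal, hWlen] at this
        omega
      · exact ⟨g.val, fun _ => ⟨g.isLt, hv⟩⟩
    · exact ⟨0, fun h => absurd h hj⟩
  choose F hF using hword
  have hFlt : ∀ j, j < n - 1 → F j < c.size := fun j hj => (hF j hj).1
  have hFval : ∀ j, j < n - 1 → gateVal c (F j) = W.take (j + 2) := fun j hj => (hF j hj).2
  have hFinj : ∀ j, j < n - 1 → ∀ j', j' < n - 1 → j ≠ j' → F j ≠ F j' := by
    intro j hj j' hj' hne heq
    have h1 : W.take (j + 2) = W.take (j' + 2) := by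
      rw [← hFval j hj, ← hFval j' hj', heq]
    have := congrArg List.length h1
    rw [List.length_take, List.length_take, hWlen] at this
    omega
  have hzero : ∀ j, j < n - 1 → (0 : Fin n) ∈ gateVal c (F j) := by
    intro j hj
    rw [hFval j hj, hW]
    exact hzeromem (j + 1)
  -- prefix gates are in the cone of O or outside it
  have hFcone : ∀ j, j < n - 1 → F j ∈ cone c O ∨ F j ∉ cone c O := fun j _ => em _
  set S : Finset ℕ := Finset.range (n - 1) with hS
  set S1 : Finset ℕ := S.filter (fun j => F j ∈ cone c O) with hS1
  set S2 : Finset ℕ := S.filter (fun j => ¬ F j ∈ cone c O) with hS2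
  have hsplit : S1.card + S2.card = n - 1 := by
    rw [hS1, hS2, Finset.card_filter_add_card_filter_not, hS, Finset.card_range]
  have hOnodup : (gateVal c O).Nodup := by rw [hOval]; exact hWnodup
  -- cone cardinality
  have hconecard : n ≤ (cone c O).card + 1 := by
    have := cone_card c O hOlt hOnodup
    rw [hOval, hWlen] at this
    exact this
  -- S2 bound
  have hS2card : S2.card + (cone c O).card ≤ c.size := by
    have hinj : Set.InjOn F S2 := by
      intro j hj j' hj' heq
      by_contra hne
      simp only [hS2, Finset.coe_filter, Set.mem_setOf_eq, hS, Finset.mem_range] at hj hj'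
      exact hFinj j hj.1 j' hj'.1 hne heq
    have hdisj : Disjoint (S2.image F) (cone c O) := by
      rw [Finset.disjoint_left]
      intro g hg hgc
      obtain ⟨j, hj, rfl⟩ := Finset.mem_image.mp hg
      rw [hS2, Finset.mem_filter] at hj
      exact hj.2 hgc
    have hsub : S2.image F ∪ cone c O ⊆ Finset.range c.size := by
      intro g hg
      rcases Finset.mem_union.mp hg with hg | hg
      · obtain ⟨j, hj, rfl⟩ := Finset.mem_image.mp hg
        rw [hS2, Finset.mem_filter, hS, Finset.mem_range] at hj
        exact Finset.mem_range.mpr (hFlt j hj.1)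
      · exact Finset.mem_range.mpr (mem_cone c O g hg).1
    have := Finset.card_le_card hsub
    rw [Finset.card_union_of_disjoint hdisj, Finset.card_range,
      Finset.card_image_of_injOn hinj] at this
    exact this
  -- S1 bound via depths
  have hS1card : S1.card ≤ circuitDepth c := by
    have hinj : Set.InjOn (fun j => gateDepth c (F j)) S1 := by
      intro j hj j' hj' heq
      by_contra hne
      simp only [hS1, Finset.coe_filter, Set.mem_setOf_eq, hS, Finset.mem_range] at hj hj'
      have hne' : F j ≠ F j' := hFinj j hj.1 j' hj'.1 hne
      have hcomp := cone_comparable c O hOnodup (F j) hj.2 (F j') hj'.2 (0 : Fin n)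
        (hzero j hj.1) (hzero j' hj'.1)
      rcases hcomp with hmem | hmem
      · exact absurd heq (ne_of_lt (depth_lt_of_mem_cone c (F j') (F j) hmem hne'))
      · exact absurd heq.symm (ne_of_lt (depth_lt_of_mem_cone c (F j) (F j') hmem hne'.symm))
    have hsub : S1.image (fun j => gateDepth c (F j)) ⊆ Finset.Icc 1 (circuitDepth c) := by
      intro d hd
      obtain ⟨j, hj, rfl⟩ := Finset.mem_image.mp hd
      rw [hS1, Finset.mem_filter, hS, Finset.mem_range] at hj
      have hflt := hFlt j hj.1
      rw [Finset.mem_Icc]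
      constructor
      · rw [gateDepth_eq c hflt]; omega
      · exact Finset.le_sup (f := fun g : Fin c.size => gateDepth c g.val)
          (Finset.mem_univ (⟨F j, hflt⟩ : Fin c.size))
    have := Finset.card_le_card hsub
    rw [Finset.card_image_of_injOn hinj, Nat.card_Icc] at this
    omega
  omega
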